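/- Let P be a probability distribution on a finite set Y ⊆ ℝ, let O ⊆ ℝ be a finite output set, and let ℓ : ℝ × ℝ → ℝ≥0 satisfy: for every y ∈ ℝ, ℓ(ŷ, y) is nonincreasing in ŷ on (−∞, y] and nondecreasing in ŷ on [y, ∞), and for every ŷ ∈ ℝ, ℓ(ŷ, y) is nonincreasing in y on (−∞, ŷ] and nondecreasing in y on [ŷ, ∞). Then for every ε > 0 there exists a map Φ : Y → O such that L(RR-on-Bins^Φ_ε; P) = inf_M L(M; P), where the infimum is over all ε-DP mechanisms M with inputs in Y and outputs in O. -/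

import Mathlib

/-- Transition probability of the `RR-on-Bins` mechanism with output set `Yh`,
map `Phi` and privacy parameter `eps`. -/
noncomputable def rrProb (eps : ℝ) (Yh : Finset ℝ) (Phi : ℝ → ℝ) (y yh : ℝ) : ℝ :=
  if yh = Phi y then Real.exp eps / (Real.exp eps + (Yh.card : ℝ) - 1)
  else 1 / (Real.exp eps + (Yh.card : ℝ) - 1)

/-- Expected loss of `RR-on-Bins` under a finitely supported prior `p` on `Y`. -/
noncomputable def rrLoss (l : ℝ → ℝ → ℝ) (eps : ℝ) (Yh : Finset ℝ) (Phi : ℝ → ℝ)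
    (Y : Finset ℝ) (p : ℝ → ℝ) : ℝ :=
  ∑ y ∈ Y, p y * ∑ yh ∈ Yh, rrProb eps Yh Phi y yh * l yh y

/-- A mechanism with inputs in `Y` and outputs in `O`, given by its transition
matrix `M`, is `eps`-DP feasible if rows are probability distributions on `O`
and the `eps`-DP constraint holds. -/
def IsFeasible (eps : ℝ) (Y O : Finset ℝ) (M : ℝ → ℝ → ℝ) : Prop :=
  (∀ y ∈ Y, ∀ yh ∈ O, 0 ≤ M y yh) ∧
  (∀ y ∈ Y, ∑ yh ∈ O, M y yh = 1) ∧
  (∀ y ∈ Y, ∀ y' ∈ Y, ∀ yh ∈ O, M y' yh ≤ Real.exp eps * M y yh)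

/-- Expected loss of a mechanism with matrix `M` under prior `p` on `Y`. -/
noncomputable def mechLoss (l : ℝ → ℝ → ℝ) (Y O : Finset ℝ) (p : ℝ → ℝ)
    (M : ℝ → ℝ → ℝ) : ℝ :=
  ∑ y ∈ Y, p y * ∑ yh ∈ O, M y yh * l yh y

namespace RRB
open Finset




noncomputable def nxt (T : Finset ℝ) (t : ℝ) : ℝ :=
  if h : (T.filter (fun s => t < s)).Nonempty then (T.filter (fun s => t < s)).min' h else t

lemma nxt_ge (T : Finset ℝ) (t : ℝ) : t ≤ nxt T t := by
  unfold nxt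
  split
  · rename_i h
    have h1 := (T.filter (fun s => t < s)).min'_mem h
    have h2 := (mem_filter.1 h1).2
    linarith
  · exact le_refl _

lemma nxt_gt {T : Finset ℝ} {t u : ℝ} (hu : u ∈ T) (htu : t < u) : t < nxt T t ∧ nxt T t ≤ u := by
  have hne : (T.filter (fun s => t < s)).Nonempty := ⟨u, mem_filter.2 ⟨hu, htu⟩⟩
  rw [nxt, dif_pos hne]
  constructor
  · exact (mem_filter.1 ((T.filter (fun s => t < s)).min'_mem hne)).2
  · exact min'_le _ _ (mem_filter.2 ⟨hu, htu⟩)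

lemma nxt_mem {T : Finset ℝ} {t u : ℝ} (hu : u ∈ T) (htu : t < u) : nxt T t ∈ T := by
  have hne : (T.filter (fun s => t < s)).Nonempty := ⟨u, mem_filter.2 ⟨hu, htu⟩⟩
  rw [nxt, dif_pos hne]
  exact (mem_filter.1 ((T.filter (fun s => t < s)).min'_mem hne)).1

lemma nxt_min {T : Finset ℝ} {t s : ℝ} (hs : s ∈ T) (hts : t < s) : nxt T t ≤ s := by
  have hne : (T.filter (fun s' => t < s')).Nonempty := ⟨s, mem_filter.2 ⟨hs, hts⟩⟩
  rw [nxt, dif_pos hne]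
  exact min'_le _ _ (mem_filter.2 ⟨hs, hts⟩)

/-- Telescoping along a finite set of reals. -/
lemma tel {T : Finset ℝ} (htne : T.Nonempty) :
    ∀ (k : ℕ) (u : ℝ), u ∈ T →
      (T.filter (fun t => u ≤ t ∧ t < T.max' htne)).card ≤ k →
      ∑ t ∈ T.filter (fun t => u ≤ t ∧ t < T.max' htne), (nxt T t - t) = T.max' htne - u := by
  classical
  intro k
  induction k with
  | zero =>
    intro u hu hcard
    have hempty : T.filter (fun t => u ≤ t ∧ t < T.max' htne) = ∅ := card_eq_zero.1 (Nat.le_zero.1 hcard)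
    have hue : u = T.max' htne := by
      by_contra hne
      have hlt : u < T.max' htne := lt_of_le_of_ne (le_max' T u hu) hne
      have : u ∈ T.filter (fun t => u ≤ t ∧ t < T.max' htne) := mem_filter.2 ⟨hu, le_refl u, hlt⟩
      rw [hempty] at this
      exact absurd this (notMem_empty u)
    rw [hempty, sum_empty, hue]
    ring
  | succ k ih =>
    intro u hu hcard
    by_cases hue : u = T.max' htne
    · have hempty : T.filter (fun t => u ≤ t ∧ t < T.max' htne) = ∅ := by
        apply filter_eq_empty_iff.2
        intro t ht
        rintro ⟨h1, h2⟩
        exact absurd (lt_of_le_of_lt h1 h2) (by rw [hue]; exact lt_irrefl _)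
      rw [hempty, sum_empty, hue]; ring
    · have hlt : u < T.max' htne := lt_of_le_of_ne (le_max' T u hu) hue
      have hmax : T.max' htne ∈ T := T.max'_mem htne
      obtain ⟨hgt, hle⟩ := nxt_gt hmax hlt
      have hnmem : nxt T u ∈ T := nxt_mem hmax hlt
      have hsplit : T.filter (fun t => u ≤ t ∧ t < T.max' htne)
          = insert u (T.filter (fun t => nxt T u ≤ t ∧ t < T.max' htne)) := by
        ext t
        simp only [mem_filter, mem_insert]
        constructor
        · rintro ⟨htT, hut, htm⟩
          rcases eq_or_lt_of_le hut with h | h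
          · exact Or.inl h.symm
          · exact Or.inr ⟨htT, nxt_min htT h, htm⟩
        · rintro (rfl | ⟨htT, hnt, htm⟩)
          · exact ⟨hu, le_refl _, hlt⟩
          · exact ⟨htT, le_trans (le_of_lt hgt) hnt, htm⟩
      have hun : u ∉ T.filter (fun t => nxt T u ≤ t ∧ t < T.max' htne) := by
        intro hmem
        have := (mem_filter.1 hmem).2.1
        linarith
      have hcard' : (T.filter (fun t => nxt T u ≤ t ∧ t < T.max' htne)).card ≤ k := by
        have : (T.filter (fun t => u ≤ t ∧ t < T.max' htne)).card
            = (T.filter (fun t => nxt T u ≤ t ∧ t < T.max' htne)).card + 1 := by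
          rw [hsplit, card_insert_of_notMem hun]
        omega
      rw [hsplit, sum_insert hun, ih (nxt T u) hnmem hcard']
      ring

lemma sum_tstar_sub {γ : Type*} (C : Finset γ) (c : γ → ℝ) (h : γ → ℝ)
    (T : Finset ℝ) (htne : T.Nonempty) (hmem : ∀ i ∈ C, h i ∈ T) :
    ∑ i ∈ C, c i * h i
      = (T.max' htne) * ∑ i ∈ C, c i
        - ∑ t ∈ T.filter (fun t => t < T.max' htne),
            (∑ i ∈ C.filter (fun i => h i ≤ t), c i) * (nxt T t - t) := by
  classical
  have key : ∀ i ∈ C, c i * h i = c i * T.max' htne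
      - ∑ t ∈ T.filter (fun t => h i ≤ t ∧ t < T.max' htne), c i * (nxt T t - t) := by
    intro i hi
    have htel := tel htne (T.filter (fun t => h i ≤ t ∧ t < T.max' htne)).card (h i)
      (hmem i hi) le_rfl
    rw [← mul_sum, htel]
    ring
  rw [sum_congr rfl key, sum_sub_distrib]
  congr 1
  · rw [← sum_mul, mul_comm]
  · rw [sum_comm' (s := C) (t := fun i => T.filter (fun t => h i ≤ t ∧ t < T.max' htne))
      (t' := T.filter (fun t => t < T.max' htne))
      (s' := fun t => C.filter (fun i => h i ≤ t))]
    · apply sum_congr rfl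
      intro t _
      rw [sum_mul]
    · intro i t
      simp only [mem_filter]
      tauto

/-- Dominance / rearrangement lemma: if the `a` mass is everywhere cumulatively
dominated by the `b` mass, the `a`-average of `f` is at least the `b`-average of `g`. -/
lemma dominance {α β : Type*} (A : Finset α) (B : Finset β)
    (a : α → ℝ) (b : β → ℝ) (f : α → ℝ) (g : β → ℝ)
    (ha : ∀ i ∈ A, 0 ≤ a i) (hb : ∀ j ∈ B, 0 ≤ b j)
    (hmass : ∑ i ∈ A, a i = ∑ j ∈ B, b j)
    (hdom : ∀ t : ℝ, ∑ i ∈ A.filter (fun i => f i ≤ t), a i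
      ≤ ∑ j ∈ B.filter (fun j => g j ≤ t), b j) :
    ∑ j ∈ B, b j * g j ≤ ∑ i ∈ A, a i * f i := by
  classical
  rcases A.eq_empty_or_nonempty with rfl | hA
  · have hz : ∑ j ∈ B, b j = 0 := by simpa using hmass.symm
    have hb0 : ∀ j ∈ B, b j = 0 := (sum_eq_zero_iff_of_nonneg hb).1 hz
    have : ∑ j ∈ B, b j * g j = 0 := sum_eq_zero (fun j hj => by rw [hb0 j hj, zero_mul])
    simp [this]
  rcases B.eq_empty_or_nonempty with rfl | hB
  · have hz : ∑ i ∈ A, a i = 0 := by simpa using hmass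
    have ha0 : ∀ i ∈ A, a i = 0 := (sum_eq_zero_iff_of_nonneg ha).1 hz
    have : ∑ i ∈ A, a i * f i = 0 := sum_eq_zero (fun i hi => by rw [ha0 i hi, zero_mul])
    simp [this]
  set T : Finset ℝ := A.image f ∪ B.image g with hT
  have htne : T.Nonempty := by
    obtain ⟨i, hi⟩ := hA
    exact ⟨f i, mem_union_left _ (mem_image_of_mem f hi)⟩
  have hfT : ∀ i ∈ A, f i ∈ T := fun i hi => mem_union_left _ (mem_image_of_mem f hi)
  have hgT : ∀ j ∈ B, g j ∈ T := fun j hj => mem_union_right _ (mem_image_of_mem g hj)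
  rw [sum_tstar_sub A a f T htne hfT, sum_tstar_sub B b g T htne hgT, hmass]
  apply sub_le_sub_left
  apply sum_le_sum
  intro t ht
  have hgap : 0 ≤ nxt T t - t := sub_nonneg.2 (nxt_ge T t)
  exact mul_le_mul_of_nonneg_right (hdom t) hgap


noncomputable def Dd (eps : ℝ) (B : Finset ℝ) : ℝ := Real.exp eps + (B.card : ℝ) - 1

noncomputable def minl (l : ℝ → ℝ → ℝ) (y : ℝ) (B : Finset ℝ) : ℝ :=
  if h : B.Nonempty then (B.image (fun o => l o y)).min' (h.image _) else 0

noncomputable def auxv (l : ℝ → ℝ → ℝ) (eps : ℝ) (y : ℝ) (B : Finset ℝ) : ℝ :=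
  (Real.exp eps - 1) * minl l y B + ∑ o ∈ B, l o y

noncomputable def RB (l : ℝ → ℝ → ℝ) (eps : ℝ) (Y : Finset ℝ) (p : ℝ → ℝ)
    (B : Finset ℝ) : ℝ :=
  ∑ y ∈ Y, p y * (auxv l eps y B / Dd eps B)

lemma one_lt_E {eps : ℝ} (heps : 0 < eps) : 1 < Real.exp eps :=
  Real.one_lt_exp_iff.2 heps

lemma Dd_pos {eps : ℝ} (heps : 0 < eps) {B : Finset ℝ} (hB : B.Nonempty) :
    0 < Dd eps B := by
  have h1 : (1 : ℝ) ≤ (B.card : ℝ) := by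
    have := card_pos.2 hB
    exact_mod_cast this
  have := one_lt_E heps
  unfold Dd; linarith

lemma minl_le {l : ℝ → ℝ → ℝ} {y : ℝ} {B : Finset ℝ} (hB : B.Nonempty)
    {o : ℝ} (ho : o ∈ B) : minl l y B ≤ l o y := by
  rw [minl, dif_pos hB]
  exact min'_le _ _ (mem_image_of_mem _ ho)

lemma minl_eq {l : ℝ → ℝ → ℝ} {y : ℝ} {B : Finset ℝ} (hB : B.Nonempty)
    {o : ℝ} (ho : o ∈ B) (hmin : ∀ o' ∈ B, l o y ≤ l o' y) : minl l y B = l o y := by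
  apply le_antisymm (minl_le hB ho)
  rw [minl, dif_pos hB]
  apply le_min'
  intro z hz
  obtain ⟨o', ho', rfl⟩ := mem_image.1 hz
  exact hmin o' ho'

lemma minl_exists {l : ℝ → ℝ → ℝ} {y : ℝ} {B : Finset ℝ} (hB : B.Nonempty) :
    ∃ o ∈ B, minl l y B = l o y := by
  rw [minl, dif_pos hB]
  have hmem := (B.image (fun o => l o y)).min'_mem (hB.image _)
  obtain ⟨o, ho, hval⟩ := Finset.mem_image.1 hmem
  exact ⟨o, ho, hval.symm⟩

lemma rr_inner (l : ℝ → ℝ → ℝ) (eps : ℝ) (Yh : Finset ℝ) (Phi : ℝ → ℝ) (y : ℝ)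
    (hmem : Phi y ∈ Yh) :
    ∑ yh ∈ Yh, rrProb eps Yh Phi y yh * l yh y
      = ((Real.exp eps - 1) * l (Phi y) y + ∑ o ∈ Yh, l o y) / Dd eps Yh := by
  classical
  rw [← Finset.add_sum_erase _ _ hmem]
  have h1 : rrProb eps Yh Phi y (Phi y) = Real.exp eps / Dd eps Yh := by
    rw [rrProb, if_pos rfl]; rfl
  have h2 : ∑ yh ∈ Yh.erase (Phi y), rrProb eps Yh Phi y yh * l yh y
      = (∑ yh ∈ Yh.erase (Phi y), l yh y) / Dd eps Yh := by
    rw [Finset.sum_div]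
    apply sum_congr rfl
    intro yh hyh
    rw [rrProb, if_neg (ne_of_mem_erase hyh)]
    rw [div_mul_eq_mul_div, one_mul, Dd]
  rw [h1, h2, Finset.sum_erase_eq_sub hmem]
  ring

lemma RB_eq (l : ℝ → ℝ → ℝ) (eps : ℝ) (Y : Finset ℝ) (p : ℝ → ℝ) (B : Finset ℝ) :
    RB l eps Y p B = (∑ y ∈ Y, p y * auxv l eps y B) / Dd eps B := by
  rw [RB, Finset.sum_div]
  apply sum_congr rfl
  intro y _
  ring

lemma rr_embed (l : ℝ → ℝ → ℝ) (eps : ℝ) (Y O : Finset ℝ) (p : ℝ → ℝ)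
    (hY : Y.Nonempty) (heps : 0 < eps) (Phi : ℝ → ℝ) (hmaps : ∀ y ∈ Y, Phi y ∈ O) :
    ∃ M : ℝ → ℝ → ℝ, IsFeasible eps Y O M ∧
      mechLoss l Y O p M = rrLoss l eps (Y.image Phi) Phi Y p := by
  classical
  set Yh := Y.image Phi with hYh
  have hYhne : Yh.Nonempty := hY.image _
  have hsub : Yh ⊆ O := by
    intro o ho
    obtain ⟨y, hy, rfl⟩ := mem_image.1 ho
    exact hmaps y hy
  have hD : 0 < Real.exp eps + (Yh.card : ℝ) - 1 := Dd_pos heps hYhne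
  have hE : 1 < Real.exp eps := one_lt_E heps
  have hprob_nonneg : ∀ y o, 0 ≤ rrProb eps Yh Phi y o := by
    intro y o
    rw [rrProb]
    split
    · positivity
    · positivity
  have hprob_le : ∀ y o, rrProb eps Yh Phi y o ≤ Real.exp eps / (Real.exp eps + (Yh.card : ℝ) - 1) := by
    intro y o
    rw [rrProb]
    split
    · exact le_refl _
    · exact div_le_div_of_nonneg_right hE.le hD.le
  have hprob_ge : ∀ y o, 1 / (Real.exp eps + (Yh.card : ℝ) - 1) ≤ rrProb eps Yh Phi y o := by
    intro y o
    rw [rrProb]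
    split
    · exact div_le_div_of_nonneg_right hE.le hD.le
    · exact le_refl _
  have hrowsum : ∀ y ∈ Y, ∑ o ∈ Yh, rrProb eps Yh Phi y o = 1 := by
    intro y hy
    have hmem : Phi y ∈ Yh := mem_image_of_mem _ hy
    rw [← Finset.add_sum_erase _ _ hmem]
    have h1 : rrProb eps Yh Phi y (Phi y) = Real.exp eps / (Real.exp eps + (Yh.card : ℝ) - 1) := by
      rw [rrProb, if_pos rfl]
    have h2 : ∑ yh ∈ Yh.erase (Phi y), rrProb eps Yh Phi y yh
        = ((Yh.card : ℝ) - 1) * (1 / (Real.exp eps + (Yh.card : ℝ) - 1)) := by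
      rw [Finset.sum_congr rfl (fun yh hyh => by rw [rrProb, if_neg (ne_of_mem_erase hyh)])]
      rw [Finset.sum_const, card_erase_of_mem hmem, nsmul_eq_mul]
      congr 1
      have hcard : 1 ≤ Yh.card := card_pos.2 hYhne
      push_cast [Nat.cast_sub hcard]
      ring
    rw [h1, h2]
    field_simp
    ring
  refine ⟨fun y o => if o ∈ Yh then rrProb eps Yh Phi y o else 0, ⟨?_, ?_, ?_⟩, ?_⟩
  · intro y _ o _
    dsimp only
    split
    · exact hprob_nonneg y o
    · exact le_refl 0
  · intro y hy
    rw [Finset.sum_ite_mem, Finset.inter_eq_right.2 hsub]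
    exact hrowsum y hy
  · intro y _ y' _ o _
    dsimp only
    by_cases ho : o ∈ Yh
    · simp only [if_pos ho]
      calc rrProb eps Yh Phi y' o ≤ Real.exp eps / (Real.exp eps + (Yh.card : ℝ) - 1) := hprob_le y' o
        _ = Real.exp eps * (1 / (Real.exp eps + (Yh.card : ℝ) - 1)) := by ring
        _ ≤ Real.exp eps * rrProb eps Yh Phi y o := by
            apply mul_le_mul_of_nonneg_left (hprob_ge y o) (Real.exp_nonneg eps)
    · simp only [if_neg ho, mul_zero, le_refl]
  · rw [mechLoss, rrLoss]
    apply sum_congr rfl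
    intro y _
    congr 1
    simp only [ite_mul, zero_mul]
    rw [Finset.sum_ite_mem, Finset.inter_eq_right.2 hsub]


lemma claimC (l : ℝ → ℝ → ℝ) (eps : ℝ) (Y O : Finset ℝ) (p : ℝ → ℝ)
    (hY : Y.Nonempty) (heps : 0 < eps) :
    ∀ (n : ℕ) (B : Finset ℝ), B.card ≤ n → B.Nonempty → B ⊆ O →
    ∃ Phi : ℝ → ℝ, (∀ y ∈ Y, Phi y ∈ O) ∧
      rrLoss l eps (Y.image Phi) Phi Y p ≤ RB l eps Y p B := by
  classical
  intro n
  induction n with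
  | zero =>
    intro B hcard hB _
    exact absurd (card_pos.2 hB) (by omega)
  | succ n ih =>
    intro B hcard hB hBO
    have hfil : ∀ y : ℝ, (B.filter (fun o => ∀ o' ∈ B, l o y ≤ l o' y)).Nonempty := by
      intro y
      obtain ⟨o, ho, hm⟩ := B.exists_min_image (fun o => l o y) hB
      exact ⟨o, mem_filter.2 ⟨ho, hm⟩⟩
    set Phi : ℝ → ℝ := fun y => (B.filter (fun o => ∀ o' ∈ B, l o y ≤ l o' y)).min' (hfil y)
      with hPhi
    have hPhiB : ∀ y, Phi y ∈ B := fun y =>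
      (mem_filter.1 ((B.filter _).min'_mem (hfil y))).1
    have hPhimin : ∀ y, ∀ o' ∈ B, l (Phi y) y ≤ l o' y := fun y =>
      (mem_filter.1 ((B.filter _).min'_mem (hfil y))).2
    have hminl : ∀ y, minl l y B = l (Phi y) y := fun y => minl_eq hB (hPhiB y) (hPhimin y)
    have hsub : Y.image Phi ⊆ B := by
      intro o ho; obtain ⟨y, hy, rfl⟩ := mem_image.1 ho; exact hPhiB y
    by_cases hcase : Y.image Phi = B
    · refine ⟨Phi, fun y hy => hBO (hPhiB y), le_of_eq ?_⟩
      rw [rrLoss, hcase, RB]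
      apply sum_congr rfl
      intro y hy
      congr 1
      rw [rr_inner l eps B Phi y (hPhiB y), auxv, hminl y]
    · have hss : Y.image Phi ⊂ B := Finset.ssubset_iff_subset_ne.2 ⟨hsub, hcase⟩
      obtain ⟨o', ho'B, ho'n⟩ := exists_of_ssubset hss
      set B' := B.erase o' with hB'
      have hYB' : Y.image Phi ⊆ B' := subset_erase.2 ⟨hsub, ho'n⟩
      have hB'ne : B'.Nonempty := (hY.image Phi).mono hYB'
      have hcardB2 : 2 ≤ B.card := by
        have h1 := card_pos.2 hB'ne
        rw [card_erase_of_mem ho'B] at h1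
        omega
      have hcard' : B'.card ≤ n := by
        rw [card_erase_of_mem ho'B]; omega
      have hminl' : ∀ y ∈ Y, minl l y B' = l (Phi y) y := by
        intro y hy
        apply minl_eq hB'ne (hYB' (mem_image_of_mem Phi hy))
        intro o2 ho2
        exact hPhimin y o2 (erase_subset _ _ ho2)
      have hDpos : 0 < Dd eps B := Dd_pos heps hB
      have hD'pos : 0 < Dd eps B' := Dd_pos heps hB'ne
      have hDD : Dd eps B = Dd eps B' + 1 := by
        rw [Dd, Dd, card_erase_of_mem ho'B]
        push_cast [Nat.cast_sub (by omega : 1 ≤ B.card)]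
        ring
      have hauxsplit : ∀ y ∈ Y, auxv l eps y B = auxv l eps y B' + l o' y := by
        intro y hy
        rw [auxv, auxv, hminl y, hminl' y hy, ← Finset.add_sum_erase _ _ ho'B]
        ring
      set S' := ∑ y ∈ Y, p y * auxv l eps y B' with hS'
      set c' := ∑ y ∈ Y, p y * l o' y with hc'
      have hRBB : RB l eps Y p B = (S' + c') / Dd eps B := by
        rw [RB_eq]
        congr 1
        rw [hS', hc', ← sum_add_distrib]
        apply sum_congr rfl
        intro y hy
        rw [hauxsplit y hy]
        ring
      have hRBB' : RB l eps Y p B' = S' / Dd eps B' := RB_eq l eps Y p B'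
      by_cases hle : RB l eps Y p B' ≤ RB l eps Y p B
      · obtain ⟨Phi2, hm2, hr2⟩ := ih B' hcard' hB'ne (fun x hx => hBO (erase_subset _ _ hx))
        exact ⟨Phi2, hm2, hr2.trans hle⟩
      · push_neg at hle
        have hkey : c' * Dd eps B' < S' := by
          have h2 := hle
          rw [hRBB, hRBB', hDD, div_lt_div_iff₀ (by linarith) hD'pos] at h2
          nlinarith
        have hco : c' < RB l eps Y p B := by
          rw [hRBB, lt_div_iff₀ hDpos, hDD]
          nlinarith
        have hsingle : RB l eps Y p {o'} = c' := by
          rw [RB_eq]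
          have hdd : Dd eps {o'} = Real.exp eps := by rw [Dd]; simp
          have haux : ∀ y ∈ Y, p y * auxv l eps y {o'} = p y * l o' y * Real.exp eps := by
            intro y hy
            rw [auxv]
            have hm : minl l y {o'} = l o' y :=
              minl_eq (singleton_nonempty o') (mem_singleton_self o')
                (fun x hx => by rw [mem_singleton.1 hx])
            rw [hm, sum_singleton]
            ring
          rw [hdd, sum_congr rfl haux, ← sum_mul, hc']
          field_simp
        obtain ⟨Phi2, hm2, hr2⟩ := ih {o'} (by simp; omega)
          (singleton_nonempty o') (fun x hx => by rw [mem_singleton.1 hx]; exact hBO ho'B)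
        refine ⟨Phi2, hm2, hr2.trans ?_⟩
        rw [hsingle]
        exact hco.le


lemma summin (O : Finset ℝ) (m : ℝ → ℝ) (hm : ∀ o ∈ O, 0 ≤ m o) (t : ℝ) (ht : 0 ≤ t)
    (hO : O.Nonempty) :
    min t (∑ o ∈ O, m o) ≤ ∑ o ∈ O, min t (m o) := by
  by_cases hall : ∀ o ∈ O, m o ≤ t
  · have h : ∑ o ∈ O, min t (m o) = ∑ o ∈ O, m o :=
      sum_congr rfl fun o ho => min_eq_right (hall o ho)
    rw [h]
    exact min_le_right _ _
  · push_neg at hall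
    obtain ⟨o0, ho0, hgt⟩ := hall
    refine (min_le_left _ _).trans ?_
    calc t = min t (m o0) := (min_eq_left hgt.le).symm
      _ ≤ ∑ o ∈ O, min t (m o) :=
        single_le_sum (fun o ho => le_min ht (hm o ho)) ho0

lemma hardcore (l : ℝ → ℝ → ℝ) (eps : ℝ) (Y O : Finset ℝ) (p : ℝ → ℝ) (M : ℝ → ℝ → ℝ)
    (hl0 : ∀ yh y, 0 ≤ l yh y)
    (h1 : ∀ y : ℝ, AntitoneOn (fun yh => l yh y) (Set.Iic y))
    (h2 : ∀ y : ℝ, MonotoneOn (fun yh => l yh y) (Set.Ici y))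
    (hY : Y.Nonempty) (hO : O.Nonempty)
    (hp0 : ∀ y ∈ Y, 0 ≤ p y) (heps : 0 < eps)
    (hfeas : IsFeasible eps Y O M)
    (c : ℝ) (hc : ∀ B : Finset ℝ, B.Nonempty → B ⊆ O → c ≤ RB l eps Y p B) :
    c ≤ mechLoss l Y O p M := by
  classical
  obtain ⟨hnn, hrow, hdp⟩ := hfeas
  set E := Real.exp eps with hEdef
  have hE : 1 < E := one_lt_E heps
  -- column minima
  set m : ℝ → ℝ := fun o => (Y.image (fun y => M y o)).min' (hY.image _) with hmdef
  have hm_le : ∀ o, ∀ y ∈ Y, m o ≤ M y o := fun o y hy =>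
    min'_le _ _ (mem_image_of_mem _ hy)
  have hm_ex : ∀ o, ∃ y ∈ Y, m o = M y o := by
    intro o
    have hmem := (Y.image (fun y => M y o)).min'_mem (hY.image _)
    obtain ⟨y, hy, hval⟩ := mem_image.1 hmem
    exact ⟨y, hy, hval.symm⟩
  have hm_nn : ∀ o ∈ O, 0 ≤ m o := by
    intro o ho
    obtain ⟨y, hy, hval⟩ := hm_ex o
    rw [hval]
    exact hnn y hy o ho
  have hMle : ∀ o ∈ O, ∀ y ∈ Y, M y o ≤ E * m o := by
    intro o ho y hy
    obtain ⟨y', hy', hval⟩ := hm_ex o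
    rw [hval]
    exact hdp y' hy' y hy o ho
  have hM1 : ∀ y ∈ Y, ∀ o ∈ O, M y o ≤ 1 := by
    intro y hy o ho
    rw [← hrow y hy]
    exact single_le_sum (fun o' ho' => hnn y hy o' ho') ho
  set s := ∑ o ∈ O, m o with hsdef
  obtain ⟨y0, hy0⟩ := hY
  have hs1 : s ≤ 1 := by
    rw [← hrow y0 hy0]
    exact sum_le_sum (fun o _ => hm_le o y0 hy0)
  have hs2 : 1 ≤ E * s := by
    have h := hrow y0 hy0
    calc (1:ℝ) = ∑ o ∈ O, M y0 o := h.symm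
      _ ≤ ∑ o ∈ O, E * m o := sum_le_sum (fun o ho => hMle o ho y0 hy0)
      _ = E * s := by rw [← mul_sum]
  have hsnn : 0 ≤ s := sum_nonneg (fun o ho => hm_nn o ho)
  -- the level δ
  set F : ℝ → ℝ := fun t => (E - 1) * t + ∑ o ∈ O, min t (m o) with hFdef
  have hFcont : Continuous F := by
    apply Continuous.add
    · exact (continuous_const.mul continuous_id)
    · exact continuous_finset_sum _ (fun o _ => continuous_id.min continuous_const)
  have hF0 : F 0 = 0 := by
    simp only [hFdef, mul_zero]
    rw [sum_congr rfl (fun o ho => min_eq_left (hm_nn o ho))]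
    simp
  have hF1 : 1 ≤ F 1 := by
    have hmin := summin O m hm_nn 1 zero_le_one hO
    have hEs : 1 / E ≤ s := by
      rw [div_le_iff₀ (by linarith : (0:ℝ) < E)] at *
      nlinarith
    rcases le_total 1 s with h | h
    · have : min (1:ℝ) s = 1 := min_eq_left h
      rw [this] at hmin
      simp only [hFdef]
      nlinarith
    · have : min (1:ℝ) s = s := min_eq_right h
      rw [this] at hmin
      simp only [hFdef]
      have hEinv : 0 < E := by linarith
      have h2' : (E - 1) * 1 + s - 1 = (E*E - E + E*s - E) / E := by
        field_simp
      nlinarith [sq_nonneg (E - 1), mul_pos hEinv hEinv]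
  obtain ⟨δ, hδmem, hFδ⟩ : ∃ δ ∈ Set.Icc (0:ℝ) 1, F δ = 1 := by
    have := intermediate_value_Icc (by norm_num : (0:ℝ) ≤ 1) hFcont.continuousOn
    have h1mem : (1:ℝ) ∈ Set.Icc (F 0) (F 1) := by
      rw [hF0]
      exact ⟨zero_le_one, hF1⟩
    obtain ⟨δ, hδ, hFδ⟩ := this h1mem
    exact ⟨δ, hδ, hFδ⟩
  have hδ0 : 0 ≤ δ := hδmem.1
  have hδpos : 0 < δ := by
    rcases eq_or_lt_of_le hδ0 with h | h
    · exfalso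
      rw [← h, hF0] at hFδ
      norm_num at hFδ
    · exact h
  have hEδ : E * δ ≤ 1 := by
    by_contra hcon
    push_neg at hcon
    have hmin := summin O m hm_nn δ hδ0 hO
    have : F δ > 1 := by
      simp only [hFdef]
      rcases le_total δ s with h | h
      · have : min δ s = δ := min_eq_left h
        rw [this] at hmin
        nlinarith
      · have : min δ s = s := min_eq_right h
        rw [this] at hmin
        nlinarith
    linarith [hFδ.le]
  -- demands
  set d : ℝ → ℝ := fun o => min δ (m o) with hddef
  have hd_nn : ∀ o ∈ O, 0 ≤ d o := fun o ho => le_min hδ0 (hm_nn o ho)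
  have hd_δ : ∀ o, d o ≤ δ := fun o => min_le_left _ _
  have hd_m : ∀ o, d o ≤ m o := fun o => min_le_right _ _
  have hdsum : ∑ o ∈ O, d o = 1 - (E - 1) * δ := by
    have : F δ = (E - 1) * δ + ∑ o ∈ O, d o := rfl
    rw [this] at hFδ
    linarith
  have hνδ : δ ≤ ∑ o ∈ O, d o := by
    rw [hdsum]
    nlinarith
  -- cumulative sums
  set Cu : ℝ → ℝ := fun z => ∑ o ∈ O.filter (fun x => x ≤ z), d o with hCudef
  set Cl : ℝ → ℝ := fun z => ∑ o ∈ O.filter (fun x => x < z), d o with hCldef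
  have hCu_nn : ∀ z, 0 ≤ Cu z := fun z => sum_nonneg (fun o ho => hd_nn o (mem_filter.1 ho).1)
  have hCl_nn : ∀ z, 0 ≤ Cl z := fun z => sum_nonneg (fun o ho => hd_nn o (mem_filter.1 ho).1)
  have hsubsum : ∀ (P Q : ℝ → Prop) [DecidablePred P] [DecidablePred Q],
      (∀ x ∈ O, P x → Q x) → ∑ o ∈ O.filter P, d o ≤ ∑ o ∈ O.filter Q, d o := by
    intro P Q _ _ hPQ
    apply sum_le_sum_of_subset_of_nonneg
    · intro x hx
      rw [mem_filter] at hx ⊢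
      exact ⟨hx.1, hPQ x hx.1 hx.2⟩
    · intro o ho _
      exact hd_nn o (mem_filter.1 ho).1
  have hCu_mono : ∀ {z z'}, z ≤ z' → Cu z ≤ Cu z' := by
    intro z z' h
    exact hsubsum _ _ (fun x _ hx => le_trans hx h)
  have hCl_mono : ∀ {z z'}, z ≤ z' → Cl z ≤ Cl z' := by
    intro z z' h
    exact hsubsum _ _ (fun x _ hx => lt_of_lt_of_le hx h)
  have hClCu : ∀ {z z'}, z ≤ z' → Cu z ≤ Cl z' ∨ Cu z ≤ Cu z' := by
    intro z z' h
    exact Or.inr (hCu_mono h)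
  have hCl_le_Cu : ∀ z, Cl z ≤ Cu z := fun z => hsubsum _ _ (fun x _ hx => hx.le)
  have hCu_lt_Cl : ∀ {z z'}, z < z' → Cu z ≤ Cl z' := by
    intro z z' h
    exact hsubsum _ _ (fun x _ hx => lt_of_le_of_lt hx h)
  have hCuCl : ∀ o ∈ O, Cu o = Cl o + d o := by
    intro o ho
    have hins : O.filter (fun x => x ≤ o) = insert o (O.filter (fun x => x < o)) := by
      ext x
      simp only [mem_filter, mem_insert]
      constructor
      · rintro ⟨hxO, hxle⟩
        rcases eq_or_lt_of_le hxle with h | h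
        · exact Or.inl h
        · exact Or.inr ⟨hxO, h⟩
      · rintro (rfl | ⟨hxO, hxlt⟩)
        · exact ⟨ho, le_refl x⟩
        · exact ⟨hxO, hxlt.le⟩
    rw [hCudef, hCldef]
    simp only
    rw [hins, sum_insert (by simp)]
    ring
  have hCuO : Cu (O.max' hO) = ∑ o ∈ O, d o := by
    rw [hCudef]
    simp only
    congr 1
    apply filter_true_of_mem
    intro x hx
    exact le_max' O x hx
  have hClO : Cl (O.min' hO) = 0 := by
    rw [hCldef]
    simp only
    rw [filter_false_of_mem, sum_empty]
    intro x hx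
    exact not_lt.2 (min'_le O x hx)
  -- remainders and breakpoints
  set rem : ℝ → ℝ := fun x => x - δ * ⌊x / δ⌋ with hremdef
  have hrem_bounds : ∀ x, 0 ≤ rem x ∧ rem x < δ := by
    intro x
    have h : rem x = δ * Int.fract (x / δ) := by
      rw [hremdef, Int.fract]
      field_simp
    constructor
    · rw [h]
      exact mul_nonneg hδ0 (Int.fract_nonneg _)
    · rw [h]
      calc δ * Int.fract (x / δ) < δ * 1 := by
            exact mul_lt_mul_of_pos_left (Int.fract_lt_one _) hδpos
        _ = δ := mul_one δ
  set L : Finset ℝ :=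
    insert 0 (insert δ ((O.image (fun o => rem (Cu o))) ∪ (O.image (fun o => rem (Cl o)))))
    with hLdef
  have h0L : (0:ℝ) ∈ L := mem_insert_self _ _
  have hδL : δ ∈ L := mem_insert_of_mem (mem_insert_self _ _)
  have hremCuL : ∀ o ∈ O, rem (Cu o) ∈ L := by
    intro o ho
    apply mem_insert_of_mem
    apply mem_insert_of_mem
    exact mem_union_left _ (mem_image_of_mem _ ho)
  have hremClL : ∀ o ∈ O, rem (Cl o) ∈ L := by
    intro o ho
    apply mem_insert_of_mem
    apply mem_insert_of_mem
    exact mem_union_right _ (mem_image_of_mem _ ho)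
  have hLbounds : ∀ x ∈ L, 0 ≤ x ∧ x ≤ δ := by
    intro x hx
    rw [hLdef] at hx
    rcases mem_insert.1 hx with rfl | hx
    · exact ⟨le_refl 0, hδ0⟩
    rcases mem_insert.1 hx with rfl | hx
    · exact ⟨hδ0, le_refl x⟩
    rcases mem_union.1 hx with hx | hx
    · obtain ⟨o, _, rfl⟩ := mem_image.1 hx
      exact ⟨(hrem_bounds _).1, (hrem_bounds _).2.le⟩
    · obtain ⟨o, _, rfl⟩ := mem_image.1 hx
      exact ⟨(hrem_bounds _).1, (hrem_bounds _).2.le⟩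
  have hn2 : 2 ≤ L.card := by
    apply Finset.one_lt_card.2
    exact ⟨0, h0L, δ, hδL, by intro h; rw [h] at hδpos; exact lt_irrefl _ hδpos⟩
  -- sorted enumeration of L
  set sfun : ℕ → ℝ := fun j => if h : j < L.card then (L.orderEmbOfFin rfl) ⟨j, h⟩ else δ
    with hsfundef
  have hsfun_mem : ∀ j (h : j < L.card), sfun j ∈ L := by
    intro j h
    rw [hsfundef]
    simp only [dif_pos h]
    exact Finset.orderEmbOfFin_mem _ _ _
  have hsfun_strict : ∀ {i j : ℕ}, i < j → (h : j < L.card) → sfun i < sfun j := by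
    intro i j hij hj
    rw [hsfundef]
    simp only [dif_pos hj, dif_pos (lt_trans hij hj)]
    exact (L.orderEmbOfFin rfl).strictMono (by exact hij)
  have hsfun_mono : ∀ {i j : ℕ}, i ≤ j → (h : j < L.card) → sfun i ≤ sfun j := by
    intro i j hij hj
    rcases eq_or_lt_of_le hij with rfl | h
    · exact le_refl _
    · exact (hsfun_strict h hj).le
  have hsfun_surj : ∀ r ∈ L, ∃ j, ∃ h : j < L.card, sfun j = r := by
    intro r hr
    have : r ∈ Set.range (L.orderEmbOfFin rfl) := by
      rw [Finset.range_orderEmbOfFin]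
      exact hr
    obtain ⟨⟨j, hj⟩, hval⟩ := this
    refine ⟨j, hj, ?_⟩
    rw [hsfundef]
    simp only [dif_pos hj]
    exact hval
  have hsfun0 : sfun 0 = 0 := by
    have h0 : (0:ℕ) < L.card := by omega
    apply le_antisymm
    · obtain ⟨j, hj, hval⟩ := hsfun_surj 0 h0L
      calc sfun 0 ≤ sfun j := hsfun_mono (Nat.zero_le j) hj
        _ = 0 := hval
    · exact (hLbounds _ (hsfun_mem 0 h0)).1
  have hsfunlast : sfun (L.card - 1) = δ := by
    have hlast : L.card - 1 < L.card := by omega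
    apply le_antisymm
    · exact (hLbounds _ (hsfun_mem _ hlast)).2
    · obtain ⟨j, hj, hval⟩ := hsfun_surj δ hδL
      calc δ = sfun j := hval.symm
        _ ≤ sfun (L.card - 1) := hsfun_mono (by omega) hlast
  have hsfun_lt_δ : ∀ j ∈ range (L.card - 1), sfun j < δ := by
    intro j hj
    rw [mem_range] at hj
    rw [← hsfunlast]
    exact hsfun_strict (by omega) (by omega)
  have hsfun_nn : ∀ j ∈ range (L.card - 1), 0 ≤ sfun j := by
    intro j hj
    rw [mem_range] at hj
    exact (hLbounds _ (hsfun_mem j (by omega))).1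
  have hμ_nn : ∀ j ∈ range (L.card - 1), 0 ≤ sfun (j+1) - sfun j := by
    intro j hj
    rw [mem_range] at hj
    have := hsfun_strict (Nat.lt_succ_self j) (by omega : j + 1 < L.card)
    linarith
  -- prefix sums
  have hPS : ∀ r ∈ L, ∑ j ∈ range (L.card - 1),
      (if sfun j < r then sfun (j+1) - sfun j else 0) = r := by
    intro r hr
    obtain ⟨i, hi, rfl⟩ := hsfun_surj r hr
    have hig : i ≤ L.card - 1 := by omega
    have hcongr : ∀ j ∈ range (L.card - 1),
        (if sfun j < sfun i then sfun (j+1) - sfun j else 0)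
        = (if j < i then sfun (j+1) - sfun j else 0) := by
      intro j hj
      rw [mem_range] at hj
      by_cases hji : j < i
      · rw [if_pos (hsfun_strict hji hi), if_pos hji]
      · rw [if_neg ?_, if_neg hji]
        push_neg at hji
        exact not_lt.2 (hsfun_mono hji (by omega))
    rw [sum_congr rfl hcongr, ← sum_filter]
    have hfil : (range (L.card - 1)).filter (fun j => j < i) = range i := by
      ext j
      simp only [mem_filter, mem_range]
      omega
    rw [hfil, sum_range_sub sfun i, hsfun0, sub_zero]
  have hμsum : ∑ j ∈ range (L.card - 1), (sfun (j+1) - sfun j) = δ := by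
    have h := hPS δ hδL
    rw [← h]
    apply sum_congr rfl
    intro j hj
    rw [if_pos (hsfun_lt_δ j hj)]
  -- grid counting function
  set g : ℝ → ℕ → ℤ := fun x j => ⌈(x - sfun j) / δ⌉ with hgdef
  have hceil : ∀ (x : ℝ), 0 ≤ x → ∀ j ∈ range (L.card - 1),
      ((g x j : ℝ)) = (⌊x / δ⌋ : ℝ) + (if sfun j < rem x then (1:ℝ) else 0) := by
    intro x hx j hj
    have hxj0 : 0 ≤ sfun j := hsfun_nn j hj
    have hxjδ : sfun j < δ := hsfun_lt_δ j hj
    have hsplit : (x - sfun j) / δ = (rem x - sfun j) / δ + (⌊x / δ⌋ : ℤ) := by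
      rw [hremdef]
      field_simp
      ring
    rw [hgdef]
    simp only
    rw [hsplit, Int.ceil_add_intCast]
    rcases lt_or_ge (sfun j) (rem x) with h | h
    · have hc : ⌈(rem x - sfun j) / δ⌉ = 1 := by
        apply Int.ceil_eq_iff.2
        constructor
        · push_cast
          have : (0:ℝ) < rem x - sfun j := by linarith
          have := div_pos this hδpos
          linarith
        · push_cast
          rw [div_le_one hδpos]
          have := (hrem_bounds x).2
          linarith
      rw [hc, if_pos h]
      push_cast
      ring
    · have hc : ⌈(rem x - sfun j) / δ⌉ = 0 := by
        rw [Int.ceil_eq_zero_iff]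
        constructor
        · have : (-1:ℝ) * δ < rem x - sfun j := by
            have := (hrem_bounds x).1
            linarith
          have := (lt_div_iff₀ hδpos).2 this
          simpa using this
        · apply div_nonpos_of_nonpos_of_nonneg <;> linarith
      rw [hc, if_neg (not_lt.2 h)]
      push_cast
      ring
  -- main piece identity
  have hMPI : ∀ (x : ℝ), 0 ≤ x → rem x ∈ L →
      ∑ j ∈ range (L.card - 1), (sfun (j+1) - sfun j) * ((g x j : ℤ) : ℝ) = x := by
    intro x hx hrx
    have hcongr : ∀ j ∈ range (L.card - 1),
        (sfun (j+1) - sfun j) * ((g x j : ℤ) : ℝ)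
        = (sfun (j+1) - sfun j) * (⌊x / δ⌋ : ℝ)
          + (if sfun j < rem x then sfun (j+1) - sfun j else 0) := by
      intro j hj
      rw [hceil x hx j hj]
      by_cases h : sfun j < rem x
      · rw [if_pos h, if_pos h]
        ring
      · rw [if_neg h, if_neg h]
        ring
    rw [sum_congr rfl hcongr, sum_add_distrib, ← sum_mul, hμsum, hPS _ hrx]
    rw [hremdef]
    simp only
    ring
  -- monotonicity properties of g
  have hg_mono : ∀ (x x' : ℝ) (j : ℕ), x ≤ x' → g x j ≤ g x' j := by
    intro x x' j h
    apply Int.ceil_le_ceil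
    apply div_le_div_of_nonneg_right _ hδ0
    linarith
  have hg_step : ∀ (x x' : ℝ) (j : ℕ), x' ≤ x + δ → g x' j ≤ g x j + 1 := by
    intro x x' j h
    have : (x' - sfun j) / δ ≤ (x - sfun j) / δ + 1 := by
      rw [div_add' _ _ _ (ne_of_gt hδpos)]
      apply div_le_div_of_nonneg_right _ hδ0
      linarith
    calc g x' j ≤ ⌈(x - sfun j) / δ + 1⌉ := Int.ceil_le_ceil this
      _ = g x j + 1 := by
          rw [hgdef]
          simp only
          exact_mod_cast Int.ceil_add_one _
  have hg_jump : ∀ (x x' : ℝ) (j : ℕ), x + δ ≤ x' → g x j + 1 ≤ g x' j := by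
    intro x x' j h
    have : (x - sfun j) / δ + 1 ≤ (x' - sfun j) / δ := by
      rw [div_add' _ _ _ (ne_of_gt hδpos)]
      apply div_le_div_of_nonneg_right _ hδ0
      linarith
    calc g x j + 1 = ⌈(x - sfun j) / δ + 1⌉ := by
          rw [hgdef]; simp only
          exact_mod_cast (Int.ceil_add_one _).symm
      _ ≤ g x' j := Int.ceil_le_ceil this
  have hg_zero : ∀ j ∈ range (L.card - 1), g 0 j ≤ 0 := by
    intro j hj
    rw [hgdef]
    simp only
    rw [Int.ceil_le]
    push_cast
    apply div_nonpos_of_nonpos_of_nonneg _ hδ0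
    have := hsfun_nn j hj
    linarith
  have hg_δ : ∀ j ∈ range (L.card - 1), 1 ≤ g δ j := by
    intro j hj
    rw [hgdef]
    simp only
    have : (0:ℤ) < ⌈(δ - sfun j) / δ⌉ := by
      apply Int.lt_ceil.2
      push_cast
      apply div_pos _ hδpos
      have := hsfun_lt_δ j hj
      linarith
    omega
  -- the bin family
  set Bset : ℕ → Finset ℝ := fun j => O.filter (fun o => g (Cl o) j < g (Cu o) j) with hBsetdef
  have hBsub : ∀ j, Bset j ⊆ O := fun j => filter_subset _ _
  have hgdiff01 : ∀ o ∈ O, ∀ j : ℕ, g (Cl o) j ≤ g (Cu o) j ∧ g (Cu o) j ≤ g (Cl o) j + 1 := by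
    intro o ho j
    constructor
    · exact hg_mono _ _ j (hCl_le_Cu o)
    · apply hg_step
      rw [hCuCl o ho]
      have := hd_δ o
      linarith
  -- coverage identity: the measure of pieces covering bin o equals d o
  have hν : ∀ o ∈ O, ∑ j ∈ range (L.card - 1),
      (if o ∈ Bset j then sfun (j+1) - sfun j else 0) = d o := by
    intro o ho
    have hcongr : ∀ j ∈ range (L.card - 1),
        (if o ∈ Bset j then sfun (j+1) - sfun j else 0)
        = (sfun (j+1) - sfun j) * ((g (Cu o) j : ℤ) : ℝ)
          - (sfun (j+1) - sfun j) * ((g (Cl o) j : ℤ) : ℝ) := by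
      intro j hj
      obtain ⟨hle, hstep⟩ := hgdiff01 o ho j
      by_cases h : o ∈ Bset j
      · have hlt : g (Cl o) j < g (Cu o) j := by
          rw [hBsetdef] at h
          exact (mem_filter.1 h).2
        have heq : g (Cu o) j = g (Cl o) j + 1 := by omega
        rw [if_pos h, heq]
        push_cast
        ring
      · have heq : g (Cu o) j = g (Cl o) j := by
          rw [hBsetdef] at h
          simp only [mem_filter, not_and] at h
          have := h ho
          omega
        rw [if_neg h, heq]
        ring
    rw [sum_congr rfl hcongr, sum_sub_distrib,
      hMPI (Cu o) (hCu_nn o) (hremCuL o ho), hMPI (Cl o) (hCl_nn o) (hremClL o ho),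
      hCuCl o ho]
    ring
  -- swap lemma
  have hswap : ∀ h : ℝ → ℝ, ∑ j ∈ range (L.card - 1),
      (sfun (j+1) - sfun j) * (∑ o ∈ Bset j, h o) = ∑ o ∈ O, d o * h o := by
    intro h
    have h1 : ∀ j ∈ range (L.card - 1),
        (sfun (j+1) - sfun j) * (∑ o ∈ Bset j, h o)
        = ∑ o ∈ O, (if o ∈ Bset j then (sfun (j+1) - sfun j) * h o else 0) := by
      intro j hj
      rw [mul_sum, hBsetdef]
      simp only
      rw [sum_filter]
      apply sum_congr rfl
      intro o ho
      by_cases hmem : o ∈ Bset j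
      · rw [if_pos hmem]
        have : g (Cl o) j < g (Cu o) j := by
          rw [hBsetdef] at hmem
          exact (mem_filter.1 hmem).2
        rw [if_pos this]
      · rw [if_neg hmem]
        have : ¬ (g (Cl o) j < g (Cu o) j) := by
          intro hlt
          exact hmem (mem_filter.2 ⟨ho, hlt⟩)
        rw [if_neg this]
    rw [sum_congr rfl h1, sum_comm]
    apply sum_congr rfl
    intro o ho
    have h2 : ∀ j ∈ range (L.card - 1),
        (if o ∈ Bset j then (sfun (j+1) - sfun j) * h o else 0)
        = (if o ∈ Bset j then (sfun (j+1) - sfun j) else 0) * h o := by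
      intro j hj
      by_cases hmem : o ∈ Bset j
      · rw [if_pos hmem, if_pos hmem]
      · rw [if_neg hmem, if_neg hmem, zero_mul]
    rw [sum_congr rfl h2, ← sum_mul, hν o ho]
  -- telescoping over order-convex subsets
  have hT : ∀ (k : ℕ) (I : Finset ℝ), I.card ≤ k → I ⊆ O → ∀ (hI : I.Nonempty),
      (∀ o1 ∈ I, ∀ o2 ∈ I, ∀ o ∈ O, o1 ≤ o → o ≤ o2 → o ∈ I) →
      ∀ j : ℕ, (∀ o ∈ I, o ∉ Bset j) →
      g (Cu (I.max' hI)) j = g (Cl (I.min' hI)) j := by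
    intro k
    induction k with
    | zero =>
      intro I hcard _ hI _ _ _
      exact absurd (card_pos.2 hI) (by omega)
    | succ k ih =>
      intro I hcard hIO hI hOC j hmiss
      have hgeq : ∀ o ∈ I, g (Cu o) j = g (Cl o) j := by
        intro o ho
        have h := hmiss o ho
        rw [hBsetdef] at h
        simp only [mem_filter, not_and] at h
        have hnlt := h (hIO ho)
        have := (hgdiff01 o (hIO ho) j).1
        omega
      by_cases hcard1 : I.card = 1
      · obtain ⟨x, rfl⟩ := card_eq_one.1 hcard1
        rw [max'_singleton, min'_singleton]
        exact hgeq x (mem_singleton_self x)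
      · have hcard2 : 2 ≤ I.card := by
          have := card_pos.2 hI
          omega
        set b := I.max' hI with hbdef
        have hbI : b ∈ I := I.max'_mem hI
        have hI' : (I.erase b).Nonempty := by
          apply card_pos.1
          rw [card_erase_of_mem hbI]
          omega
        set b' := (I.erase b).max' hI' with hb'def
        have hb'I : b' ∈ I.erase b := (I.erase b).max'_mem hI'
        have hb'lt : b' < b := by
          rcases (mem_erase.1 hb'I) with ⟨hne, hmem⟩
          exact lt_of_le_of_ne (I.le_max' b' hmem) hne
        have hminmem : I.min' hI ∈ I.erase b := by
          apply mem_erase.2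
          constructor
          · have := I.min'_lt_max'_of_card (by omega)
            exact ne_of_lt this
          · exact I.min'_mem hI
        have hminI' : (I.erase b).min' hI' = I.min' hI := by
          apply le_antisymm
          · exact min'_le _ _ hminmem
          · apply le_min'
            intro x hx
            exact I.min'_le x (mem_of_mem_erase hx)
        have hfil : O.filter (fun x => x < b) = O.filter (fun x => x ≤ b') := by
          ext x
          simp only [mem_filter]
          constructor
          · rintro ⟨hxO, hxlt⟩
            refine ⟨hxO, ?_⟩
            by_contra hnot
            push_neg at hnot
            have hxI : x ∈ I := by
              apply hOC (I.min' hI) (I.min'_mem hI) b hbI x hxO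
              · calc I.min' hI ≤ b' := I.min'_le b' (mem_of_mem_erase hb'I)
                  _ ≤ x := hnot.le
              · exact hxlt.le
            have hxe : x ∈ I.erase b := mem_erase.2 ⟨ne_of_lt hxlt, hxI⟩
            exact absurd ((I.erase b).le_max' x hxe) (not_le.2 hnot)
          · rintro ⟨hxO, hxle⟩
            exact ⟨hxO, lt_of_le_of_lt hxle hb'lt⟩
        have hClCu' : Cl b = Cu b' := by
          rw [hCldef, hCudef]
          simp only
          rw [hfil]
        have hOC' : ∀ o1 ∈ I.erase b, ∀ o2 ∈ I.erase b, ∀ o ∈ O, o1 ≤ o → o ≤ o2 → o ∈ I.erase b := by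
          intro o1 ho1 o2 ho2 o ho hle1 hle2
          apply mem_erase.2
          constructor
          · have ho2b : o2 ≤ b' := (I.erase b).le_max' o2 ho2
            have : o < b := lt_of_le_of_lt (le_trans hle2 ho2b) hb'lt
            exact ne_of_lt this
          · exact hOC o1 (mem_of_mem_erase ho1) o2 (mem_of_mem_erase ho2) o ho hle1 hle2
        have hcard' : (I.erase b).card ≤ k := by
          rw [card_erase_of_mem hbI]
          omega
        have hmiss' : ∀ o ∈ I.erase b, o ∉ Bset j := fun o ho => hmiss o (mem_of_mem_erase ho)
        calc g (Cu b) j = g (Cl b) j := hgeq b hbI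
          _ = g (Cu b') j := by rw [hClCu']
          _ = g (Cl ((I.erase b).min' hI')) j :=
              ih (I.erase b) hcard' (fun x hx => hIO (mem_of_mem_erase hx)) hI' hOC' j hmiss'
          _ = g (Cl (I.min' hI)) j := by rw [hminI']
  -- each piece's bin set is nonempty
  have hBne : ∀ j ∈ range (L.card - 1), (Bset j).Nonempty := by
    intro j hj
    rw [nonempty_iff_ne_empty]
    intro hempty
    have hmiss : ∀ o ∈ O, o ∉ Bset j := by
      intro o _ hmem
      rw [hempty] at hmem
      exact notMem_empty o hmem
    have heq := hT O.card O le_rfl (Finset.Subset.refl O) hO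
      (fun o1 _ o2 _ o ho _ _ => ho) j hmiss
    have h1 : g (Cl (O.min' hO)) j ≤ 0 := by
      rw [hClO]
      exact hg_zero j hj
    have h2 : 1 ≤ g (Cu (O.max' hO)) j := by
      have hδle : δ ≤ Cu (O.max' hO) := by
        rw [hCuO]
        exact hνδ
      calc (1:ℤ) ≤ g δ j := hg_δ j hj
        _ ≤ g (Cu (O.max' hO)) j := hg_mono _ _ j hδle
    omega
  -- per-row bound
  have hpery : ∀ y ∈ Y, ∑ j ∈ range (L.card - 1),
      (sfun (j+1) - sfun j) * auxv l eps y (Bset j) ≤ ∑ o ∈ O, M y o * l o y := by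
    intro y hy
    have hbase : ∑ j ∈ range (L.card - 1), (sfun (j+1) - sfun j) * (∑ o ∈ Bset j, l o y)
        = ∑ o ∈ O, d o * l o y := hswap (fun o => l o y)
    have hdomapply : ∑ j ∈ range (L.card - 1),
        ((E - 1) * (sfun (j+1) - sfun j)) * minl l y (Bset j)
        ≤ ∑ o ∈ O, (M y o - d o) * l o y := by
      apply dominance O (range (L.card - 1)) (fun o => M y o - d o)
        (fun j => (E - 1) * (sfun (j+1) - sfun j)) (fun o => l o y)
        (fun j => minl l y (Bset j))
      · intro o ho
        have := le_trans (hd_m o) (hm_le o y hy)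
        simp only [sub_nonneg]
        exact this
      · intro j hj
        exact mul_nonneg (by linarith) (hμ_nn j hj)
      · rw [sum_sub_distrib, hrow y hy, hdsum, ← mul_sum, hμsum]
        ring
      · -- cumulative dominance
        intro t
        set I := O.filter (fun o => l o y ≤ t) with hIdef
        have hiff : ∀ j ∈ range (L.card - 1),
            (minl l y (Bset j) ≤ t ↔ ∃ o ∈ Bset j, l o y ≤ t) := by
          intro j hj
          constructor
          · intro hle
            obtain ⟨o, ho, hval⟩ := minl_exists (l := l) (y := y) (hBne j hj)
            exact ⟨o, ho, by rw [← hval]; exact hle⟩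
          · rintro ⟨o, ho, hle⟩
            exact le_trans (minl_le (hBne j hj) ho) hle
        have hmissT : ∀ j ∈ range (L.card - 1), ¬ (minl l y (Bset j) ≤ t) →
            ∀ o ∈ I, o ∉ Bset j := by
          intro j hj hnot o hoI hoB
          apply hnot
          rw [hiff j hj]
          exact ⟨o, hoB, (mem_filter.1 hoI).2⟩
        by_cases hIne : I.Nonempty
        · -- I is order convex
          have hIOC : ∀ o1 ∈ I, ∀ o2 ∈ I, ∀ o ∈ O, o1 ≤ o → o ≤ o2 → o ∈ I := by
            intro o1 ho1 o2 ho2 o ho hle1 hle2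
            rw [hIdef, mem_filter] at ho1 ho2 ⊢
            refine ⟨ho, ?_⟩
            rcases le_total o y with hoy | hoy
            · have hcmp := h1 y (show o1 ∈ Set.Iic y from le_trans hle1 hoy)
                (show o ∈ Set.Iic y from hoy) hle1
              exact le_trans hcmp ho1.2
            · have hcmp := h2 y (show o ∈ Set.Ici y from hoy)
                (show o2 ∈ Set.Ici y from le_trans hoy hle2) hle2
              exact le_trans hcmp ho2.2
          have hIO' : I ⊆ O := filter_subset _ _
          set a0 := I.min' hIne with ha0def
          set b0 := I.max' hIne with hb0def
          have ha0I : a0 ∈ I := I.min'_mem hIne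
          have hb0I : b0 ∈ I := I.max'_mem hIne
          have ha0O : a0 ∈ O := hIO' ha0I
          have hb0O : b0 ∈ O := hIO' hb0I
          have hab : a0 ≤ b0 := I.min'_le b0 hb0I
          set len := Cu b0 - Cl a0 with hlendef
          have hlen : ∑ o ∈ I, d o = len := by
            have hsplit : O.filter (fun x => x ≤ b0) = I ∪ O.filter (fun x => x < a0) := by
              ext x
              simp only [mem_union, mem_filter, hIdef]
              constructor
              · rintro ⟨hxO, hxle⟩
                rcases lt_or_ge x a0 with h | h
                · exact Or.inr ⟨hxO, h⟩
                · left
                  have := hIOC a0 ha0I b0 hb0I x hxO h hxle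
                  rw [hIdef, mem_filter] at this
                  exact this
              · rintro (⟨hxO, hxle⟩ | ⟨hxO, hxlt⟩)
                · refine ⟨hxO, ?_⟩
                  exact I.le_max' x (by rw [hIdef, mem_filter]; exact ⟨hxO, hxle⟩)
                · exact ⟨hxO, le_trans hxlt.le hab⟩
            have hdisj : Disjoint I (O.filter (fun x => x < a0)) := by
              rw [Finset.disjoint_left]
              intro x hxI hxF
              have h1' := I.min'_le x hxI
              have h2' := (mem_filter.1 hxF).2
              rw [← ha0def] at h1'
              linarith
            have : Cu b0 = ∑ o ∈ I, d o + Cl a0 := by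
              rw [hCudef, hCldef]
              simp only
              rw [hsplit, sum_union hdisj]
            rw [hlendef]
            linarith
          have hlen_nn : 0 ≤ len := by
            rw [← hlen]
            exact sum_nonneg (fun o ho => hd_nn o (hIO' ho))
          have hremb0 : rem (Cu b0) ∈ L := hremCuL b0 hb0O
          have hrema0 : rem (Cl a0) ∈ L := hremClL a0 ha0O
          by_cases hlenδ : len ≤ δ
          · -- small interval case
            have hmissb : ∑ j ∈ (range (L.card - 1)).filter
                  (fun j => ¬ (minl l y (Bset j) ≤ t)), (sfun (j+1) - sfun j)
                ≤ δ - len := by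
              have hbig : ∀ j ∈ range (L.card - 1),
                  (if ¬ (minl l y (Bset j) ≤ t) then (sfun (j+1) - sfun j) else 0)
                  ≤ (sfun (j+1) - sfun j) *
                      (1 - (((g (Cu b0) j : ℤ) : ℝ) - ((g (Cl a0) j : ℤ) : ℝ))) := by
                intro j hj
                have hdiff0 : g (Cl a0) j ≤ g (Cu b0) j := by
                  apply hg_mono
                  calc Cl a0 ≤ Cl b0 := hCl_mono hab
                    _ ≤ Cu b0 := hCl_le_Cu b0
                have hdiff1 : g (Cu b0) j ≤ g (Cl a0) j + 1 := by
                  apply hg_step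
                  linarith
                by_cases hmin : minl l y (Bset j) ≤ t
                · rw [if_neg (by simpa using hmin)]
                  have : (0:ℝ) ≤ 1 - (((g (Cu b0) j : ℤ) : ℝ) - ((g (Cl a0) j : ℤ) : ℝ)) := by
                    have : ((g (Cu b0) j : ℤ) : ℝ) ≤ ((g (Cl a0) j : ℤ) : ℝ) + 1 := by
                      exact_mod_cast hdiff1
                    linarith
                  exact mul_nonneg (hμ_nn j hj) this
                · rw [if_pos hmin]
                  have heq := hT I.card I le_rfl hIO' hIne hIOC j (hmissT j hj hmin)
                  rw [← ha0def, ← hb0def] at heq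
                  rw [heq]
                  ring_nf
                  exact le_refl _
              calc ∑ j ∈ (range (L.card - 1)).filter
                    (fun j => ¬ (minl l y (Bset j) ≤ t)), (sfun (j+1) - sfun j)
                  = ∑ j ∈ range (L.card - 1),
                      (if ¬ (minl l y (Bset j) ≤ t) then (sfun (j+1) - sfun j) else 0) := by
                    rw [sum_filter]
                _ ≤ ∑ j ∈ range (L.card - 1), (sfun (j+1) - sfun j) *
                      (1 - (((g (Cu b0) j : ℤ) : ℝ) - ((g (Cl a0) j : ℤ) : ℝ))) :=
                    sum_le_sum hbig
                _ = δ - len := by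
                    have hexpand : ∀ j ∈ range (L.card - 1), (sfun (j+1) - sfun j) *
                        (1 - (((g (Cu b0) j : ℤ) : ℝ) - ((g (Cl a0) j : ℤ) : ℝ)))
                        = (sfun (j+1) - sfun j)
                          - ((sfun (j+1) - sfun j) * ((g (Cu b0) j : ℤ) : ℝ)
                             - (sfun (j+1) - sfun j) * ((g (Cl a0) j : ℤ) : ℝ)) := by
                      intro j hj
                      ring
                    rw [sum_congr rfl hexpand, sum_sub_distrib, hμsum, sum_sub_distrib,
                      hMPI (Cu b0) (hCu_nn b0) hremb0, hMPI (Cl a0) (hCl_nn a0) hrema0]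
              -- end hmissb
            have hLHS : ∑ o ∈ I, (M y o - d o) ≤ (E - 1) * len := by
              by_cases hcap : ∀ o ∈ I, m o < δ
              · have hdm : ∀ o ∈ I, d o = m o := by
                  intro o ho
                  rw [hddef]
                  exact min_eq_right (hcap o ho).le
                calc ∑ o ∈ I, (M y o - d o) = ∑ o ∈ I, (M y o - m o) := by
                      apply sum_congr rfl
                      intro o ho
                      rw [hdm o ho]
                  _ ≤ ∑ o ∈ I, (E - 1) * m o := by
                      apply sum_le_sum
                      intro o ho
                      have := hMle o (hIO' ho) y hy
                      linarith
                  _ = (E - 1) * ∑ o ∈ I, m o := by rw [mul_sum]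
                  _ = (E - 1) * len := by
                      rw [← hlen]
                      congr 1
                      apply sum_congr rfl
                      intro o ho
                      rw [hdm o ho]
              · push_neg at hcap
                obtain ⟨o0, ho0, hδm⟩ := hcap
                have hdo0 : d o0 = δ := by
                  rw [hddef]
                  exact min_eq_left hδm
                have hlenδ' : δ ≤ len := by
                  rw [← hlen]
                  calc δ = d o0 := hdo0.symm
                    _ ≤ ∑ o ∈ I, d o := single_le_sum (fun o ho => hd_nn o (hIO' ho)) ho0
                have hleneq : len = δ := le_antisymm hlenδ hlenδ'
                calc ∑ o ∈ I, (M y o - d o) ≤ ∑ o ∈ O, (M y o - d o) := by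
                      apply sum_le_sum_of_subset_of_nonneg hIO'
                      intro o ho _
                      have := le_trans (hd_m o) (hm_le o y hy)
                      linarith
                  _ = (E - 1) * δ := by
                      rw [sum_sub_distrib, hrow y hy, hdsum]
                      ring
                  _ = (E - 1) * len := by rw [hleneq]
            -- combine in the small case
            have hRHS : ∑ j ∈ (range (L.card - 1)).filter (fun j => minl l y (Bset j) ≤ t),
                (E - 1) * (sfun (j+1) - sfun j) ≥ (E - 1) * len := by
              have hsplitsum := sum_filter_add_sum_filter_not (range (L.card - 1))
                (fun j => minl l y (Bset j) ≤ t) (fun j => sfun (j+1) - sfun j)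
              rw [← mul_sum]
              have : ∑ j ∈ (range (L.card - 1)).filter (fun j => minl l y (Bset j) ≤ t),
                  (sfun (j+1) - sfun j) ≥ len := by
                have := hmissb
                rw [← hμsum] at *
                linarith [hsplitsum]
              apply mul_le_mul_of_nonneg_left this (by linarith : (0:ℝ) ≤ E - 1)
            calc ∑ o ∈ I, (M y o - d o)
                ≤ (E - 1) * len := hLHS
              _ ≤ ∑ j ∈ (range (L.card - 1)).filter (fun j => minl l y (Bset j) ≤ t),
                  (E - 1) * (sfun (j+1) - sfun j) := hRHS
          · -- large interval case : every piece hits I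
            push_neg at hlenδ
            have hall : ∀ j ∈ range (L.card - 1), minl l y (Bset j) ≤ t := by
              intro j hj
              by_contra hnot
              have heq := hT I.card I le_rfl hIO' hIne hIOC j (hmissT j hj hnot)
              rw [← ha0def, ← hb0def] at heq
              have := hg_jump (Cl a0) (Cu b0) j (by linarith)
              omega
            have hfull : (range (L.card - 1)).filter (fun j => minl l y (Bset j) ≤ t)
                = range (L.card - 1) := by
              apply filter_true_of_mem hall
            rw [hfull]
            calc ∑ o ∈ I, (M y o - d o)
                ≤ ∑ o ∈ O, (M y o - d o) := by
                  apply sum_le_sum_of_subset_of_nonneg (hIdef ▸ filter_subset _ _)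
                  intro o ho _
                  have := le_trans (hd_m o) (hm_le o y hy)
                  linarith
              _ = ∑ j ∈ range (L.card - 1), (E - 1) * (sfun (j+1) - sfun j) := by
                  rw [sum_sub_distrib, hrow y hy, hdsum, ← mul_sum, hμsum]
                  ring
        · -- I empty
          have hIempty : I = ∅ := not_nonempty_iff_eq_empty.1 hIne
          rw [hIempty, sum_empty]
          apply sum_nonneg
          intro j hj
          exact mul_nonneg (by linarith) (hμ_nn j (mem_filter.1 hj).1)
    -- combine base and dominance parts
    have hexp : ∀ j ∈ range (L.card - 1), (sfun (j+1) - sfun j) * auxv l eps y (Bset j)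
        = ((E - 1) * (sfun (j+1) - sfun j)) * minl l y (Bset j)
          + (sfun (j+1) - sfun j) * (∑ o ∈ Bset j, l o y) := by
      intro j hj
      rw [auxv, ← hEdef]
      ring
    rw [sum_congr rfl hexp, sum_add_distrib, hbase]
    have hcomb := add_le_add hdomapply (le_refl (∑ o ∈ O, d o * l o y))
    refine hcomb.trans (le_of_eq ?_)
    rw [← sum_add_distrib]
    apply sum_congr rfl
    intro o ho
    ring
  -- final assembly
  have hDsum : ∑ j ∈ range (L.card - 1), (sfun (j+1) - sfun j) * Dd eps (Bset j) = 1 := by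
    have h1' : ∀ j ∈ range (L.card - 1), (sfun (j+1) - sfun j) * Dd eps (Bset j)
        = (E - 1) * (sfun (j+1) - sfun j)
          + (sfun (j+1) - sfun j) * (∑ o ∈ Bset j, (1:ℝ)) := by
      intro j hj
      rw [Dd, sum_const, nsmul_eq_mul, mul_one, ← hEdef]
      ring
    rw [sum_congr rfl h1', sum_add_distrib, ← mul_sum, hμsum, hswap (fun _ => (1:ℝ))]
    have h2' : ∑ o ∈ O, d o * 1 = 1 - (E - 1) * δ := by
      rw [← hdsum]
      apply sum_congr rfl
      intro o _
      ring
    rw [h2']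
    ring
  calc c = c * 1 := (mul_one c).symm
    _ = c * ∑ j ∈ range (L.card - 1), (sfun (j+1) - sfun j) * Dd eps (Bset j) := by
        rw [hDsum]
    _ = ∑ j ∈ range (L.card - 1), (sfun (j+1) - sfun j) * (c * Dd eps (Bset j)) := by
        rw [mul_sum]
        apply sum_congr rfl
        intro j hj
        ring
    _ ≤ ∑ j ∈ range (L.card - 1),
          (sfun (j+1) - sfun j) * (RB l eps Y p (Bset j) * Dd eps (Bset j)) := by
        apply sum_le_sum
        intro j hj
        apply mul_le_mul_of_nonneg_left _ (hμ_nn j hj)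
        exact mul_le_mul_of_nonneg_right (hc (Bset j) (hBne j hj) (hBsub j))
          (Dd_pos heps (hBne j hj)).le
    _ = ∑ j ∈ range (L.card - 1),
          (sfun (j+1) - sfun j) * (∑ y ∈ Y, p y * auxv l eps y (Bset j)) := by
        apply sum_congr rfl
        intro j hj
        rw [RB_eq, div_mul_cancel₀]
        exact ne_of_gt (Dd_pos heps (hBne j hj))
    _ = ∑ y ∈ Y, p y * (∑ j ∈ range (L.card - 1),
          (sfun (j+1) - sfun j) * auxv l eps y (Bset j)) := by
        have e1 : ∀ j ∈ range (L.card - 1),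
            (sfun (j+1) - sfun j) * (∑ y ∈ Y, p y * auxv l eps y (Bset j))
            = ∑ y ∈ Y, p y * ((sfun (j+1) - sfun j) * auxv l eps y (Bset j)) := by
          intro j hj
          rw [mul_sum]
          apply sum_congr rfl
          intro y hy
          ring
        rw [sum_congr rfl e1, sum_comm]
        apply sum_congr rfl
        intro y hy
        rw [mul_sum]
    _ ≤ ∑ y ∈ Y, p y * (∑ o ∈ O, M y o * l o y) := by
        apply sum_le_sum
        intro y hy
        exact mul_le_mul_of_nonneg_left (hpery y hy) (hp0 y hy)
    _ = mechLoss l Y O p M := rfl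

end RRB

/-- For (weakly) unimodal losses, some `RR-on-Bins` mechanism (with output set the
range `Phi(Y) ⊆ O`) achieves the infimum of the expected loss over all `eps`-DP
mechanisms with inputs in `Y` and outputs in `O`. -/
theorem stmt2
    (l : ℝ → ℝ → ℝ) (hl0 : ∀ yh y, 0 ≤ l yh y)
    (h1 : ∀ y : ℝ, AntitoneOn (fun yh => l yh y) (Set.Iic y))
    (h2 : ∀ y : ℝ, MonotoneOn (fun yh => l yh y) (Set.Ici y))
    (h3 : ∀ yh : ℝ, AntitoneOn (fun y => l yh y) (Set.Iic yh))
    (h4 : ∀ yh : ℝ, MonotoneOn (fun y => l yh y) (Set.Ici yh))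
    (Y O : Finset ℝ) (hO : O.Nonempty)
    (p : ℝ → ℝ) (hp0 : ∀ y ∈ Y, 0 ≤ p y) (hp1 : ∑ y ∈ Y, p y = 1)
    (eps : ℝ) (heps : 0 < eps) :
    ∃ Phi : ℝ → ℝ, (∀ y ∈ Y, Phi y ∈ O) ∧
      rrLoss l eps (Y.image Phi) Phi Y p =
        sInf { L : ℝ | ∃ M : ℝ → ℝ → ℝ, IsFeasible eps Y O M ∧ L = mechLoss l Y O p M } := by

  classical
  have hY : Y.Nonempty := by
    by_contra h
    rw [Finset.not_nonempty_iff_eq_empty] at h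
    rw [h, Finset.sum_empty] at hp1
    norm_num at hp1
  set Fam := O.powerset.filter (fun B => B.Nonempty) with hFam
  have hFamne : Fam.Nonempty :=
    ⟨O, Finset.mem_filter.2 ⟨Finset.mem_powerset_self O, hO⟩⟩
  obtain ⟨Bs, hBsFam, hBsmin⟩ := Finset.exists_min_image Fam (RRB.RB l eps Y p) hFamne
  have hBsne : Bs.Nonempty := (Finset.mem_filter.1 hBsFam).2
  have hBsO : Bs ⊆ O := Finset.mem_powerset.1 (Finset.mem_filter.1 hBsFam).1
  have hmin : ∀ B : Finset ℝ, B.Nonempty → B ⊆ O →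
      RRB.RB l eps Y p Bs ≤ RRB.RB l eps Y p B := by
    intro B hB hBO
    exact hBsmin B (Finset.mem_filter.2 ⟨Finset.mem_powerset.2 hBO, hB⟩)
  obtain ⟨Phi, hmaps, hrr⟩ := RRB.claimC l eps Y O p hY heps Bs.card Bs le_rfl hBsne hBsO
  refine ⟨Phi, hmaps, ?_⟩
  obtain ⟨M0, hM0f, hM0eq⟩ := RRB.rr_embed l eps Y O p hY heps Phi hmaps
  have hmem : rrLoss l eps (Y.image Phi) Phi Y p ∈
      { L : ℝ | ∃ M : ℝ → ℝ → ℝ, IsFeasible eps Y O M ∧ L = mechLoss l Y O p M } :=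
    ⟨M0, hM0f, hM0eq.symm⟩
  have hlb : ∀ x ∈ { L : ℝ | ∃ M : ℝ → ℝ → ℝ, IsFeasible eps Y O M ∧ L = mechLoss l Y O p M },
      rrLoss l eps (Y.image Phi) Phi Y p ≤ x := by
    rintro x ⟨M, hMf, rfl⟩
    calc rrLoss l eps (Y.image Phi) Phi Y p ≤ RRB.RB l eps Y p Bs := hrr
      _ ≤ mechLoss l Y O p M :=
          RRB.hardcore l eps Y O p M hl0 h1 h2 hY hO hp0 heps hMf _ hmin
  exact le_antisymm (le_csInf ⟨_, hmem⟩ hlb) (csInf_le ⟨_, hlb⟩ hmem)
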